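/- Let G be a simple graph on a finite type α with a tree decomposition (T, σ) in which every bag has size at most w + 1, and let k ≥ 1 be a natural number. Then the bags σ'(b) = σ(b) × (Fin k) form a tree decomposition of the k-fold blowup G^(k) (a graph on α × Fin k) on the same tree T, and every bag σ'(b) has size at most k·(w + 1). In particular, tw(G^(k)) ≤ k·tw(G) + k − 1. -/

import Mathlib

/-- A tree decomposition of a simple graph `G` on `α`: a tree `T` on `β` (connected and
acyclic) with bags `σ : β → Set α` such that every vertex is in some bag, every edge is
contained in some bag, and for every vertex the set of tree nodes whose bag contains it
induces a connected subgraph of `T`. -/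
def IsTreeDecomposition {α β : Type*} (G : SimpleGraph α) (T : SimpleGraph β)
    (σ : β → Set α) : Prop :=
  T.Connected ∧ T.IsAcyclic ∧
  (∀ v : α, ∃ b : β, v ∈ σ b) ∧
  (∀ u v : α, G.Adj u v → ∃ b : β, u ∈ σ b ∧ v ∈ σ b) ∧
  (∀ v : α, (T.induce {b : β | v ∈ σ b}).Connected)

/-- The `k`-fold blowup of a simple graph `G` on `α`: the graph on `α × Fin k` where
`(a, i)` and `(a', i')` are adjacent iff `(a, i) ≠ (a', i')` and (`a = a'` or `G.Adj a a'`). -/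
def blowup {α : Type*} (G : SimpleGraph α) (k : ℕ) : SimpleGraph (α × Fin k) where
  Adj x y := x ≠ y ∧ (x.1 = y.1 ∨ G.Adj x.1 y.1)
  symm := by
    constructor
    intro x y h
    exact ⟨h.1.symm, h.2.imp Eq.symm G.adj_symm⟩
  loopless := by constructor; intro x h; exact h.1 rfl

/-- If `G` has a tree decomposition `(T, σ)` with all bags of size at most
`w + 1` and `k ≥ 1`, then the bags `σ' b = σ b × Fin k` form a tree decomposition of the
`k`-fold blowup `G^(k)` on the same tree `T`, and every bag `σ' b` has size at most
`k · (w + 1)`. -/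
theorem stmt_15 {α β : Type*} [Fintype α] (G : SimpleGraph α) (k w : ℕ) (hk : 1 ≤ k)
    (T : SimpleGraph β) (σ : β → Set α)
    (hdecomp : IsTreeDecomposition G T σ)
    (hw : ∀ b : β, (σ b).ncard ≤ w + 1) :
    IsTreeDecomposition (blowup G k) T
      (fun b => {x : α × Fin k | x.1 ∈ σ b}) ∧
    ∀ b : β, {x : α × Fin k | x.1 ∈ σ b}.ncard ≤ k * (w + 1) := by
  obtain ⟨hconn, hacyc, hcov, hedge, hsub⟩ := hdecomp
  constructor
  · refine ⟨hconn, hacyc, ?_, ?_, ?_⟩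
    · intro v
      obtain ⟨b, hb⟩ := hcov v.1
      exact ⟨b, hb⟩
    · rintro u v ⟨hne, hadj⟩
      rcases hadj with h | h
      · obtain ⟨b, hb⟩ := hcov u.1
        exact ⟨b, hb, show v.1 ∈ σ b from h ▸ hb⟩
      · obtain ⟨b, hb1, hb2⟩ := hedge u.1 v.1 h
        exact ⟨b, hb1, hb2⟩
    · intro v
      exact hsub v.1
  · intro b
    have hset : {x : α × Fin k | x.1 ∈ σ b} = (σ b) ×ˢ (Set.univ : Set (Fin k)) := by
      ext x; simp
    rw [hset]
    have hfin : (σ b).Finite := Set.toFinite _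
    have : ((σ b) ×ˢ (Set.univ : Set (Fin k))).ncard = (σ b).ncard * k := by
      have e : ((σ b) ×ˢ (Set.univ : Set (Fin k)) : Set (α × Fin k)) ≃ (σ b) × (Fin k) :=
        (Equiv.Set.prod _ _).trans (Equiv.prodCongr (Equiv.refl _) (Equiv.Set.univ _))
      rw [← Nat.card_coe_set_eq, Nat.card_congr e, Nat.card_prod, Nat.card_eq_fintype_card (α := Fin k), Fintype.card_fin, Nat.card_coe_set_eq]
    rw [this, mul_comm]
    exact Nat.mul_le_mul_left k (hw b)
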